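/- arXiv:2504.15276 — 6 statements merged into one kernel-verified Lean document; each statement's English description precedes it below -/
import Mathlib

section
/- Let c = (1+√5)/2 be the golden ratio. Then the minimum over x ∈ [0,1] of the function (1/(2(1+x))) · (1 + c^(-(1-x)) + 2·√(1 - c^(-x)) · c^(-(1-x)/2)) equals (1+√5)/4 = c/2. -/
open Real

lemma key_alg (c x u : ℝ) (hc : c^2 = c+1) (hc1 : 1 < c) (hx0 : 0 ≤ x) (hx1 : x ≤ 1)
    (hu : u ≤ c) (hud : 1 ≤ u * (1-(2-c)*x)) : (1+(c+1)*x-u)^2 ≤ 4*c*(u-1) := by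
  set d : ℝ := 1-(2-c)*x with hdd
  have hd : 0 < d := by nlinarith
  set w : ℝ := u*d - 1 with hww
  have hw0 : 0 ≤ w := by linarith
  have hwu : w ≤ (c-1)*(1-x) := by nlinarith [mul_nonneg (sub_nonneg.2 hu) hd.le]
  have hbr : 0 ≤ 4*c*d + 2*x*(2*c-1-x) - w := by
    nlinarith [mul_nonneg hx0 (by nlinarith : (0:ℝ) ≤ 2*c-1-x)]
  have h1 : 0 ≤ x*(1-x)^2*(4*(c-1)-x) :=
    mul_nonneg (mul_nonneg hx0 (sq_nonneg _)) (by nlinarith)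
  have hid : d^2 * (4*c*(u-1) - (1+(c+1)*x-u)^2)
      = x*(1-x)^2*(4*(c-1)-x) + w*(4*c*d + 2*x*(2*c-1-x) - w) := by
    simp only [hdd, hww]
    linear_combination (-(c^2*x^4) + c*x^4 + 2*c*x^3*u - 4*c*x^3 - 4*c*x^2 + 3*x^4
      - 4*x^3*u + 2*x^3 + 2*x^2*u + 6*x^2 - 4*x) * hc
  nlinarith [mul_pos hd hd, hid, mul_nonneg hw0 hbr, h1]

theorem epr_min_problem :
    IsLeast
      ((fun x : ℝ =>
          (1 / (2 * (1 + x))) *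
            (1 + ((1 + Real.sqrt 5) / 2) ^ (-(1 - x)) +
              2 * Real.sqrt (1 - ((1 + Real.sqrt 5) / 2) ^ (-x)) *
                ((1 + Real.sqrt 5) / 2) ^ (-(1 - x) / 2))) '' Set.Icc (0 : ℝ) 1)
      ((1 + Real.sqrt 5) / 4) := by
  have h5 : Real.sqrt 5 ^ 2 = 5 := Real.sq_sqrt (by norm_num)
  have h5' : 2 < Real.sqrt 5 := by nlinarith [Real.sqrt_nonneg 5]
  set c : ℝ := (1 + Real.sqrt 5) / 2 with hcdef
  have hc1 : 1 < c := by rw [hcdef]; nlinarith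
  have hc0 : 0 < c := zero_lt_one.trans hc1
  have hc : c ^ 2 = c + 1 := by rw [hcdef]; linear_combination h5 / 4
  have hmul : c * (c - 1) = 1 := by linear_combination hc
  have hinv : c⁻¹ = c - 1 := inv_eq_of_mul_eq_one_right hmul
  constructor
  · refine ⟨0, Set.left_mem_Icc.2 zero_le_one, ?_⟩
    have e1 : c ^ (-(0:ℝ)) = 1 := by rw [neg_zero, Real.rpow_zero]
    have e2 : c ^ (-(1 - (0:ℝ))) = c⁻¹ := by norm_num [Real.rpow_neg_one]
    simp only [e1, e2, hinv]
    norm_num [Real.sqrt_zero]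
    rw [hcdef]
    ring
  · rintro y ⟨x, ⟨hx0, hx1⟩, rfl⟩
    dsimp only
    set u : ℝ := c ^ (x : ℝ) with hudef
    have hu0 : 0 < u := Real.rpow_pos_of_pos hc0 x
    have hu1 : 1 ≤ u := by
      calc (1:ℝ) = c ^ (0:ℝ) := (Real.rpow_zero c).symm
        _ ≤ c ^ x := by exact (Real.rpow_le_rpow_left_iff hc1).2 hx0
    have hu2 : u ≤ c := by
      calc u ≤ c ^ (1:ℝ) := (Real.rpow_le_rpow_left_iff hc1).2 hx1
        _ = c := Real.rpow_one c
    have e1 : c ^ (-x) = u⁻¹ := by rw [Real.rpow_neg hc0.le]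
    have e2 : c ^ (-(1-x)) = u / c := by
      rw [show -(1-x) = x - 1 by ring, Real.rpow_sub hc0, Real.rpow_one]
    have e3 : c ^ (-(1-x)/2) = Real.sqrt (u / c) := by
      rw [show -(1-x)/2 = (x-1) * (1/2) by ring, Real.rpow_mul hc0.le,
        ← Real.sqrt_eq_rpow, Real.rpow_sub hc0, Real.rpow_one]
    -- Bernoulli-type bound via convexity of exp
    have hber : u⁻¹ ≤ 1 - (2-c)*x := by
      rw [← e1, Real.rpow_def_of_pos hc0]
      have hcv := convexOn_exp.2 (Set.mem_univ (0:ℝ)) (Set.mem_univ (-Real.log c))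
        (by linarith : (0:ℝ) ≤ 1 - x) hx0 (by ring)
      simp only [smul_eq_mul, mul_zero, zero_add, Real.exp_zero, mul_one] at hcv
      calc Real.exp (Real.log c * -x) = Real.exp (x * -Real.log c) := by ring_nf
        _ ≤ (1-x) + x * Real.exp (-Real.log c) := hcv
        _ = 1 - (2-c)*x := by
            rw [Real.exp_neg, Real.exp_log hc0, hinv]; ring
    have hud : 1 ≤ u * (1-(2-c)*x) := by
      calc (1:ℝ) = u * u⁻¹ := (mul_inv_cancel₀ hu0.ne').symm
        _ ≤ u * (1-(2-c)*x) := mul_le_mul_of_nonneg_left hber hu0.le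
    have hsq : Real.sqrt (1 - u⁻¹) * Real.sqrt (u / c) = Real.sqrt ((u-1)/c) := by
      rw [← Real.sqrt_mul (by simp [inv_le_one_iff₀]; right; exact hu1 : (0:ℝ) ≤ 1 - u⁻¹)]
      congr 1
      field_simp
    have key : c * (1+x) ≤ 1 + u/c + 2 * Real.sqrt ((u-1)/c) := by
      rcases le_or_gt (c*(1+x) - 1 - u/c) 0 with h | h
      · have := Real.sqrt_nonneg ((u-1)/c)
        linarith
      · have hu' : u / c * c = u := div_mul_cancel₀ u hc0.ne'
        have hcA : c * (c*(1+x) - 1 - u/c) = 1 + (c+1)*x - u := by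
          linear_combination (1+x) * hc - hu'
        have hk := key_alg c x u hc hc1 hx0 hx1 hu2 hud
        have h4 : (c * (c*(1+x) - 1 - u/c))^2 ≤ 4*c*(u-1) := by rw [hcA]; exact hk
        have h5q : (c*(1+x) - 1 - u/c)/2 ≤ Real.sqrt ((u-1)/c) := by
          rw [Real.le_sqrt (by linarith) (div_nonneg (by linarith) hc0.le)]
          rw [div_pow, div_le_div_iff₀ (by norm_num) hc0]
          nlinarith [h4, hc0, sq_nonneg (c*(1+x) - 1 - u/c), mul_pos hc0 hc0]
        linarith
    rw [e1, e2, e3, mul_assoc, hsq]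
    have h1x : (0:ℝ) < 2 * (1 + x) := by linarith
    rw [div_mul_eq_mul_div, one_mul, le_div_iff₀ h1x]
    have : (1 + Real.sqrt 5) / 4 * (2 * (1 + x)) = c * (1 + x) := by
      rw [hcdef]; ring
    rw [this]
    linarith [key]
end

section
/- Let c = (1+√5)/2 and define f(x) = c²(x+c)² - 4cx - 4 + c^(2x-2) - 2·c^x·(x+c). Then f is convex on the interval [0,1], i.e., its second derivative f''(x) = 2c² + 4(ln c)²·c^(2x-2) - 2·c^x·(ln c)·((x+c)·ln c + 2) is nonnegative for all x ∈ [0,1]. -/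
theorem f_convex_on_Icc :
    (ConvexOn ℝ (Set.Icc (0 : ℝ) 1)
      (fun x : ℝ =>
        ((1 + Real.sqrt 5) / 2) ^ 2 * (x + (1 + Real.sqrt 5) / 2) ^ 2 -
          4 * ((1 + Real.sqrt 5) / 2) * x - 4 +
          ((1 + Real.sqrt 5) / 2) ^ (2 * x - 2) -
          2 * ((1 + Real.sqrt 5) / 2) ^ x * (x + (1 + Real.sqrt 5) / 2))) ∧
    (∀ x ∈ Set.Icc (0 : ℝ) 1,
      0 ≤ 2 * ((1 + Real.sqrt 5) / 2) ^ 2 +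
          4 * (Real.log ((1 + Real.sqrt 5) / 2)) ^ 2 *
            ((1 + Real.sqrt 5) / 2) ^ (2 * x - 2) -
          2 * ((1 + Real.sqrt 5) / 2) ^ x * Real.log ((1 + Real.sqrt 5) / 2) *
            ((x + (1 + Real.sqrt 5) / 2) * Real.log ((1 + Real.sqrt 5) / 2) + 2)) := by
  have h5 : (2.236 : ℝ) < Real.sqrt 5 := by
    have : (2.236 : ℝ) = Real.sqrt (2.236 ^ 2) := (Real.sqrt_sq (by norm_num)).symm
    rw [this]
    exact Real.sqrt_lt_sqrt (by positivity) (by norm_num)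
  have h5' : Real.sqrt 5 < 2.2361 := by
    have : (2.2361 : ℝ) = Real.sqrt (2.2361 ^ 2) := (Real.sqrt_sq (by norm_num)).symm
    rw [this]
    exact Real.sqrt_lt_sqrt (by norm_num) (by norm_num)
  set c : ℝ := (1 + Real.sqrt 5) / 2 with hc_def
  have hc1 : (1.618 : ℝ) < c := by rw [hc_def]; linarith
  have hc1' : c < 1.61805 := by rw [hc_def]; linarith
  have hc0 : (0 : ℝ) < c := by linarith
  set L : ℝ := Real.log c with hL_def
  have hL0 : 0 ≤ L := Real.log_nonneg (by linarith)
  have hLle : L ≤ 0.482 := by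
    rw [hL_def, Real.log_le_iff_le_exp hc0]
    calc c ≤ 1.61805 := hc1'.le
      _ ≤ ∑ i ∈ Finset.range 5, (0.482 : ℝ) ^ i / i.factorial := by
          norm_num [Finset.sum_range_succ, Nat.factorial]
      _ ≤ Real.exp 0.482 := Real.sum_le_exp_of_nonneg (by norm_num) 5
  -- key inequality
  have key : ∀ x ∈ Set.Icc (0 : ℝ) 1,
      0 ≤ 2 * c ^ 2 + 4 * L ^ 2 * c ^ (2 * x - 2) -
        2 * c ^ x * L * ((x + c) * L + 2) := by
    intro x hx
    obtain ⟨hx0, hx1⟩ := hx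
    have hA : (0 : ℝ) ≤ c ^ (2 * x - 2) := Real.rpow_nonneg hc0.le _
    have hcx0 : (0 : ℝ) ≤ c ^ x := Real.rpow_nonneg hc0.le _
    have hcx : c ^ x ≤ c := by
      have := Real.rpow_le_rpow_of_exponent_le (by linarith : (1:ℝ) ≤ c) hx1
      rwa [Real.rpow_one] at this
    nlinarith [mul_nonneg hL0 hL0, mul_nonneg (mul_nonneg hL0 hL0) hcx0,
      mul_nonneg hcx0 hL0, sq_nonneg L, sq_nonneg (c - 1.618),
      mul_le_mul_of_nonneg_right hcx (mul_nonneg hL0 (by nlinarith : (0:ℝ) ≤ (x + c) * L + 2)),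
      mul_nonneg (mul_nonneg hcx0 hL0) hx0]
  have hrw : ∀ y : ℝ, c ^ y = Real.exp (L * y) := fun y => Real.rpow_def_of_pos hc0 y
  have hd1 : ∀ x : ℝ, HasDerivAt (fun x : ℝ => c ^ x) (c ^ x * L) x := by
    intro x
    have inner : HasDerivAt (fun y : ℝ => L * y) L x := by
      simpa using (hasDerivAt_id x).const_mul L
    have h := inner.exp
    simp only [← hrw] at h
    exact h
  have hd2 : ∀ x : ℝ, HasDerivAt (fun x : ℝ => c ^ (2 * x - 2)) (c ^ (2 * x - 2) * (L * 2)) x := by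
    intro x
    have inner : HasDerivAt (fun y : ℝ => L * (2 * y - 2)) (L * 2) x := by
      simpa using (((hasDerivAt_id x).const_mul 2).sub_const 2).const_mul L
    have h := inner.exp
    simp only [← hrw] at h
    exact h
  set f : ℝ → ℝ := fun x : ℝ =>
      c ^ 2 * (x + c) ^ 2 - 4 * c * x - 4 + c ^ (2 * x - 2) - 2 * c ^ x * (x + c) with hf_def
  set f' : ℝ → ℝ := fun x : ℝ =>
      2 * c ^ 2 * (x + c) - 4 * c + 2 * L * c ^ (2 * x - 2) -
        2 * (c ^ x * L * (x + c) + c ^ x) with hf'_def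
  have hF' : ∀ x : ℝ, HasDerivAt f (f' x) x := by
    intro x
    have p1 : HasDerivAt (fun x : ℝ => c ^ 2 * (x + c) ^ 2) (c ^ 2 * (2 * (x + c))) x := by
      simpa using (((hasDerivAt_id x).add_const c).pow 2).const_mul (c ^ 2)
    have p2 : HasDerivAt (fun x : ℝ => 4 * c * x) (4 * c) x := by
      simpa using (hasDerivAt_id x).const_mul (4 * c)
    have p4 : HasDerivAt (fun x : ℝ => 2 * c ^ x * (x + c))
        (2 * (c ^ x * L) * (x + c) + 2 * c ^ x * 1) x := by
      have e2 : HasDerivAt (fun x : ℝ => 2 * c ^ x) (2 * (c ^ x * L)) x := (hd1 x).const_mul 2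
      exact e2.mul ((hasDerivAt_id x).add_const c)
    have h := (((p1.sub p2).sub_const 4).add (hd2 x)).sub p4
    refine h.congr_deriv ?_
    rw [hf'_def]
    ring
  have hF'' : ∀ x : ℝ, HasDerivAt f'
      (2 * c ^ 2 + 4 * L ^ 2 * c ^ (2 * x - 2) -
        2 * c ^ x * L * ((x + c) * L + 2)) x := by
    intro x
    have q1 : HasDerivAt (fun x : ℝ => 2 * c ^ 2 * (x + c)) (2 * c ^ 2 * 1) x :=
      ((hasDerivAt_id x).add_const c).const_mul (2 * c ^ 2)
    have q3 : HasDerivAt (fun x : ℝ => 2 * L * c ^ (2 * x - 2))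
        (2 * L * (c ^ (2 * x - 2) * (L * 2))) x := (hd2 x).const_mul (2 * L)
    have q4a : HasDerivAt (fun x : ℝ => c ^ x * L) (c ^ x * L * L) x := (hd1 x).mul_const L
    have q4b : HasDerivAt (fun x : ℝ => c ^ x * L * (x + c))
        (c ^ x * L * L * (x + c) + c ^ x * L * 1) x :=
      q4a.mul ((hasDerivAt_id x).add_const c)
    have q4 : HasDerivAt (fun x : ℝ => 2 * (c ^ x * L * (x + c) + c ^ x))
        (2 * ((c ^ x * L * L * (x + c) + c ^ x * L * 1) + c ^ x * L)) x :=
      (q4b.add (hd1 x)).const_mul 2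
    have h := ((q1.sub_const (4 * c)).add q3).sub q4
    refine h.congr_deriv ?_
    ring
  have hderiv : deriv f = f' := funext fun x => (hF' x).deriv
  constructor
  · apply convexOn_of_deriv2_nonneg' (convex_Icc 0 1)
    · exact fun x _ => (hF' x).differentiableAt.differentiableWithinAt
    · rw [hderiv]
      exact fun x _ => (hF'' x).differentiableAt.differentiableWithinAt
    · intro x hx
      have h2 : deriv^[2] f x = deriv (deriv f) x := rfl
      rw [h2, hderiv, (hF'' x).deriv]
      exact key x hx
  · exact key
end

section
/- Let c = (1+√5)/2 and define f(x) = c²(x+c)² - 4cx - 4 + c^(2x-2) - 2·c^x·(x+c). Then f(x) ≤ 0 for all x ∈ [0,1]. -/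
set_option maxHeartbeats 1600000


theorem f_nonpos_on_Icc :
    ∀ x ∈ Set.Icc (0 : ℝ) 1,
      ((1 + Real.sqrt 5) / 2) ^ 2 * (x + (1 + Real.sqrt 5) / 2) ^ 2 -
          4 * ((1 + Real.sqrt 5) / 2) * x - 4 +
          ((1 + Real.sqrt 5) / 2) ^ (2 * x - 2) -
          2 * ((1 + Real.sqrt 5) / 2) ^ x * (x + (1 + Real.sqrt 5) / 2) ≤ 0 := by
  intro x hx
  obtain ⟨hx0, hx1⟩ := hx
  set c : ℝ := (1 + Real.sqrt 5) / 2 with hc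
  have h5 : (Real.sqrt 5) ^ 2 = 5 := Real.sq_sqrt (by norm_num)
  have hs2 : (2 : ℝ) < Real.sqrt 5 := by
    have : (2 : ℝ) = Real.sqrt 4 := by
      rw [show (4:ℝ) = 2^2 by norm_num, Real.sqrt_sq]; norm_num
    rw [this]
    exact Real.sqrt_lt_sqrt (by norm_num) (by norm_num)
  have hs3 : Real.sqrt 5 < 3 := by
    nlinarith [h5]
  have hc1 : (3:ℝ)/2 < c := by rw [hc]; linarith
  have hc2 : c < 2 := by rw [hc]; linarith
  have hcsq : c ^ 2 = c + 1 := by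
    rw [hc]; field_simp; nlinarith [h5]
  have hcpos : (0:ℝ) < c := by linarith
  -- p = c^(x-1)
  set p : ℝ := c ^ (x - 1) with hp
  have hppos : 0 < p := Real.rpow_pos_of_pos hcpos _
  -- c^x = c * p
  have hcx : c ^ x = c * p := by
    rw [hp, Real.rpow_sub hcpos, Real.rpow_one]
    field_simp
  have hc2x : c ^ (2 * x - 2) = p * p := by
    rw [hp, ← Real.rpow_add hcpos]
    ring_nf
  -- AM-GM: c^(1-x) ≤ (1-x)*c + x
  set q : ℝ := c - (c - 1) * x with hq
  have hqx : c ^ (1 - x) ≤ q := by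
    have := Real.geom_mean_le_arith_mean2_weighted (by linarith : (0:ℝ) ≤ 1 - x)
      hx0 (le_of_lt hcpos) (by norm_num : (0:ℝ) ≤ 1) (by ring)
    rw [Real.one_rpow, mul_one] at this
    calc c ^ (1 - x) ≤ (1 - x) * c + x * 1 := this
    _ = q := by rw [hq]; ring
  have hqpos : 0 < c ^ (1 - x) := Real.rpow_pos_of_pos hcpos _
  have hpq1 : 1 ≤ p * q := by
    have hmul : p * c ^ (1 - x) = 1 := by
      rw [hp, ← Real.rpow_add hcpos]; norm_num
    calc (1:ℝ) = p * c ^ (1 - x) := hmul.symm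
    _ ≤ p * q := by
      apply mul_le_mul_of_nonneg_left hqx (le_of_lt hppos)
  -- p ≤ 1
  have hple : p ≤ 1 := by
    rw [hp]
    apply Real.rpow_le_one_of_one_le_of_nonpos (by linarith) (by linarith)
  have hqlo : 1 ≤ q := by
    rw [hq]; nlinarith
  -- goal becomes (c*(x+c) - p)^2 - 4*(c*x+1) ≤ 0
  rw [hcx, hc2x]
  have key : (c * (x + c) - p) ^ 2 ≤ 4 * (c * x + 1) := by
    have hg0 : 0 ≤ c * (x + c) - p := by nlinarith
    have hG : c * (x + c) - p ≤ c * x + c ^ 2 - 1 / q := by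
      have : 1 / q ≤ p := by
        rw [div_le_iff₀ (by linarith)]; linarith
      nlinarith
    have hG0 := le_trans hg0 hG
    have hGsq : (c * x + c ^ 2 - 1 / q) ^ 2 ≤ 4 * (c * x + 1) := by
      have hkey : ((c * x + c ^ 2) * q - 1) ^ 2 ≤ 4 * q ^ 2 * (c * x + 1) := by
        have hN : 0 ≤ x * (1 - x) ^ 2 * (4 * (c - 1) - x) := by
          apply mul_nonneg (mul_nonneg hx0 (sq_nonneg _))
          nlinarith
        have hfac : 4 * q ^ 2 * (c * x + 1) - ((c * x + c ^ 2) * q - 1) ^ 2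
            = x * (1 - x) ^ 2 * (4 * (c - 1) - x) := by
          rw [hq]
          linear_combination (1 - 4*x + 3*x^2 - 2*x^3 - x^4
            + c * (-1 - 5*x^2 + 2*x^3 + x^4)
            + c^2 * (-2 - 2*x^2 + 4*x^3 - x^4)
            + c^3 * (-1 - 2*x + 5*x^2 - 2*x^3)
            + c^4 * (-1 + 2*x - x^2)) * hcsq
        linarith [hfac, hN]
      have hqexp : c * x + c ^ 2 - 1 / q = ((c * x + c ^ 2) * q - 1) / q := by
        field_simp
      rw [hqexp, div_pow, div_le_iff₀ (by positivity)]
      calc ((c * x + c ^ 2) * q - 1) ^ 2 ≤ 4 * q ^ 2 * (c * x + 1) := hkey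
      _ = 4 * (c * x + 1) * q ^ 2 := by ring
    exact le_trans (pow_le_pow_left₀ hg0 hG 2) hGsq
  nlinarith [key]
end

section
/- Let c = (1+√5)/2 and define g(z) = 2c² + z²·(4c^(-2)·(ln c)²) - z·(2 ln c)·((c + ln z/ln c)·ln c + 2). Then g(z) ≥ 0 for all z ∈ [1, c]. -/
theorem g_nonneg_on_Icc :
    let c : ℝ := (1 + Real.sqrt 5) / 2
    let g : ℝ → ℝ := fun z =>
      2 * c ^ 2 + z ^ 2 * (4 * c ^ (-2 : ℝ) * (Real.log c) ^ 2) -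
        z * (2 * Real.log c) * ((c + Real.log z / Real.log c) * Real.log c + 2)
    ∀ z ∈ Set.Icc (1 : ℝ) c, 0 ≤ g z := by
  intro c g z hz
  obtain ⟨hz1, hzc⟩ := hz
  have hs5u : Real.sqrt 5 < 2.23608 := by
    nlinarith [Real.sq_sqrt (by norm_num : (0:ℝ) ≤ 5), Real.sqrt_nonneg 5]
  have hs5l : 2.23606 < Real.sqrt 5 := by
    nlinarith [Real.sq_sqrt (by norm_num : (0:ℝ) ≤ 5), Real.sqrt_nonneg 5]
  have hcl : (1.61803 : ℝ) < c := by simp only [c]; linarith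
  have hcu : c < 1.61804 := by simp only [c]; linarith
  have hc0 : (0:ℝ) < c := by linarith
  have hc1 : (1:ℝ) < c := by linarith
  -- bound log c ≤ 0.49 via 16th root
  have hr0 : 0 < Real.sqrt (Real.sqrt (Real.sqrt (Real.sqrt c))) := by positivity
  have h1 : Real.sqrt c < 1.27204 := by
    rw [show (1.27204:ℝ) = Real.sqrt (1.27204^2) by
      rw [Real.sqrt_sq]; norm_num]
    exact Real.sqrt_lt_sqrt hc0.le (by nlinarith)
  have h2 : Real.sqrt (Real.sqrt c) < 1.12785 := by
    rw [show (1.12785:ℝ) = Real.sqrt (1.12785^2) by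
      rw [Real.sqrt_sq]; norm_num]
    exact Real.sqrt_lt_sqrt (Real.sqrt_nonneg _) (by nlinarith)
  have h3 : Real.sqrt (Real.sqrt (Real.sqrt c)) < 1.06205 := by
    rw [show (1.06205:ℝ) = Real.sqrt (1.06205^2) by
      rw [Real.sqrt_sq]; norm_num]
    exact Real.sqrt_lt_sqrt (Real.sqrt_nonneg _) (by nlinarith)
  have h4 : Real.sqrt (Real.sqrt (Real.sqrt (Real.sqrt c))) < 1.0306 := by
    rw [show (1.0306:ℝ) = Real.sqrt (1.0306^2) by
      rw [Real.sqrt_sq]; norm_num]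
    exact Real.sqrt_lt_sqrt (Real.sqrt_nonneg _) (by nlinarith)
  have hlog16 : Real.log c =
      16 * Real.log (Real.sqrt (Real.sqrt (Real.sqrt (Real.sqrt c)))) := by
    rw [Real.log_sqrt (by positivity), Real.log_sqrt (by positivity),
      Real.log_sqrt (by positivity), Real.log_sqrt hc0.le]
    ring
  have hLu : Real.log c ≤ 0.49 := by
    have := Real.log_le_sub_one_of_pos hr0
    rw [hlog16]; linarith
  have hLpos : 0 < Real.log c := Real.log_pos hc1
  have hlz0 : 0 ≤ Real.log z := Real.log_nonneg hz1
  have hlzL : Real.log z ≤ Real.log c := by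
    apply Real.log_le_log (by linarith) hzc
  have hz0 : (0:ℝ) < z := by linarith
  have hA : 0 ≤ z ^ 2 * (4 * c ^ (-2 : ℝ) * (Real.log c) ^ 2) := by positivity
  have hexp : (c + Real.log z / Real.log c) * Real.log c + 2 =
      c * Real.log c + Real.log z + 2 := by
    field_simp
  show 0 ≤ 2 * c ^ 2 + z ^ 2 * (4 * c ^ (-2 : ℝ) * (Real.log c) ^ 2) -
        z * (2 * Real.log c) * ((c + Real.log z / Real.log c) * Real.log c + 2)
  rw [hexp]
  have s1 : z * (2 * Real.log c) * (c * Real.log c + Real.log z + 2) ≤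
      c * (2 * Real.log c) * (c * Real.log c + Real.log c + 2) := by
    gcongr
  have s2 : c * (2 * Real.log c) * (c * Real.log c + Real.log c + 2) ≤ 2 * c ^ 2 := by
    nlinarith [mul_nonneg (mul_nonneg (sub_nonneg.2 hLu) hLpos.le) hc0.le,
      mul_nonneg (sub_nonneg.2 hLu) hLpos.le]
  linarith
end

section
/- Let c = (1+√5)/2 and θ = (ln c)/2, and define T(x) = (1/2)·(1 + exp(-2θ(1-x)) + 2·√(1 - exp(-2θx))·exp(-θ(1-x))) for x ∈ [0,1]. Then T(x)/(1+x) ≥ c/2 for all x ∈ [0,1], with equality at x = 0. -/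
private lemma negE_pos (q t : ℝ) (hq : 1.272 ≤ q) (hq' : q ≤ 1.273)
    (ht : 0.785 ≤ t) (ht1 : t ≤ 1) :
    0 ≤ (q^3-2) + (q^3+q^2-2*q-1)*t + (5-7*q+9*q^2-6*q^3)*t^2
      + (-4+q-5*q^2+4*q^3)*t^3 + (2+3*q^2)*t^4 := by
  have h1 : 0 ≤ t - 0.785 := by linarith
  have h2 : 0 ≤ 1 - t := by linarith
  have h3 : 0 ≤ q - 1.272 := by linarith
  have h4 : 0 ≤ 1.273 - q := by linarith
  nlinarith [mul_nonneg h1 h2, mul_nonneg (mul_nonneg h1 h2) h1, mul_nonneg (mul_nonneg h1 h2) h2,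
    mul_nonneg (mul_nonneg (mul_nonneg h1 h2) h1) h2, mul_nonneg h3 h4,
    mul_nonneg (mul_nonneg h3 h4) h1, mul_nonneg (mul_nonneg h3 h4) h2,
    mul_nonneg (mul_nonneg h1 h1) h3, mul_nonneg (mul_nonneg h2 h2) h3,
    sq_nonneg (t - 0.9), mul_nonneg (mul_nonneg h1 h1) (mul_nonneg h2 h2)]

private lemma core_ineq (q t w : ℝ) (hq4 : q^4 = q^2+1) (hq : 1.272 ≤ q) (hq' : q ≤ 1.273)
    (ht1 : t ≤ 1) (hqt : 1 ≤ q*t) (hw0 : 0 ≤ w) (hw : w^2 = 1 - t^2) :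
    q^5*t^2*(1-t) + q^2*t^2*(q-1)*(q^2-1) - (q-1) ≤ 2*q*t*(q-1)*w := by
  have ht0 : (0:ℝ) < t := by nlinarith
  have ht785 : 0.785 ≤ t := by nlinarith
  have hE : 0 ≤ (q^3-2) + (q^3+q^2-2*q-1)*t + (5-7*q+9*q^2-6*q^3)*t^2
      + (-4+q-5*q^2+4*q^3)*t^3 + (2+3*q^2)*t^4 := negE_pos q t hq hq' ht785 ht1
  have hId : q*(1-t)*(q*t-1)*((q^3-2) + (q^3+q^2-2*q-1)*t + (5-7*q+9*q^2-6*q^3)*t^2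
      + (-4+q-5*q^2+4*q^3)*t^3 + (2+3*q^2)*t^4)
      = (2*q*t*(q-1)*w)^2 - (q^5*t^2*(1-t) + q^2*t^2*(q-1)*(q^2-1) - (q-1))^2 := by
    linear_combination (-1 + q*t + 6*q*t^2 - 9*q*t^3 + 6*q*t^4 - 2*q*t^5 - 4*q^2*t^2 + 2*q^2*t^3
      + 4*q^2*t^4 - 6*q^2*t^5 + 2*q^2*t^6 + 2*q^3*t^4 + q^4*t^4 - 2*q^4*t^5 + q^4*t^6
      - 4*q^5*t^4 + 2*q^5*t^5 + 4*q^6*t^4 - 4*q^6*t^5 + q^6*t^6) * hq4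
      - (4*q^2*t^2*(q-1)^2) * hw
  have hQ : 0 ≤ (2*q*t*(q-1)*w)^2 - (q^5*t^2*(1-t) + q^2*t^2*(q-1)*(q^2-1) - (q-1))^2 := by
    rw [← hId]
    have h1 : (0:ℝ) ≤ q*(1-t) := mul_nonneg (by linarith) (by linarith)
    exact mul_nonneg (mul_nonneg h1 (by linarith)) hE
  have hA0 : 0 ≤ 2*q*t*(q-1)*w := by
    have h : (0:ℝ) ≤ 2*q*t*(q-1) := by nlinarith
    exact mul_nonneg h hw0
  rcases le_or_gt (q^5*t^2*(1-t) + q^2*t^2*(q-1)*(q^2-1) - (q-1)) 0 with h | h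
  · linarith
  · nlinarith [hQ, hA0, h]

set_option maxHeartbeats 2000000 in
theorem epr_per_edge_ratio :
    let c : ℝ := (1 + Real.sqrt 5) / 2
    let θ : ℝ := Real.log c / 2
    let T : ℝ → ℝ := fun x =>
      (1 / 2) * (1 + Real.exp (-(2 * θ * (1 - x))) +
        2 * Real.sqrt (1 - Real.exp (-(2 * θ * x))) * Real.exp (-(θ * (1 - x))))
    (∀ x ∈ Set.Icc (0 : ℝ) 1, c / 2 ≤ T x / (1 + x)) ∧ T 0 / (1 + 0) = c / 2 := by
  intro c θ T
  have hs5 : Real.sqrt 5 ^ 2 = 5 := Real.sq_sqrt (by norm_num)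
  have hs5a : 2.236 ≤ Real.sqrt 5 := by nlinarith [Real.sqrt_nonneg 5]
  have hs5b : Real.sqrt 5 ≤ 2.2361 := by nlinarith [Real.sqrt_nonneg 5]
  have hcd : c = (1 + Real.sqrt 5) / 2 := rfl
  have hc1 : (1:ℝ) < c := by rw [hcd]; linarith
  have hc0 : (0:ℝ) < c := by linarith
  have hcsq : c^2 = c + 1 := by rw [hcd]; nlinarith
  have hca : (1.618:ℝ) ≤ c := by rw [hcd]; linarith
  have hcb : c ≤ 1.61805 := by rw [hcd]; linarith
  have hθd : θ = Real.log c / 2 := rfl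
  have hθ0 : 0 ≤ θ := by rw [hθd]; have := Real.log_nonneg hc1.le; linarith
  set q : ℝ := Real.exp θ with hqdef
  have hqpos : 0 < q := Real.exp_pos θ
  have hq2 : q^2 = c := by
    have h1 : q^2 = Real.exp (θ + θ) := by rw [Real.exp_add]; ring
    rw [h1, show θ + θ = Real.log c by rw [hθd]; ring, Real.exp_log hc0]
  have hq4 : q^4 = q^2 + 1 := by
    have : q^4 = (q^2)^2 := by ring
    rw [this, hq2, hcsq]
  
  have hqa : 1.272 ≤ q := by nlinarith
  have hqb : q ≤ 1.273 := by nlinarith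
  have hTd : ∀ x : ℝ, T x = (1 / 2) * (1 + Real.exp (-(2 * θ * (1 - x))) +
        2 * Real.sqrt (1 - Real.exp (-(2 * θ * x))) * Real.exp (-(θ * (1 - x)))) := fun _ => rfl
  constructor
  · rintro x ⟨hx0, hx1⟩
    set t : ℝ := Real.exp (-(θ * x)) with htdef
    have htpos : 0 < t := Real.exp_pos _
    have ht1 : t ≤ 1 := Real.exp_le_one_iff.2 (by nlinarith)
    have hqt : 1 ≤ q * t := by
      rw [hqdef, htdef, ← Real.exp_add]
      exact Real.one_le_exp (by nlinarith)
    have he1 : Real.exp (-(θ * (1 - x))) = 1 / (q * t) := by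
      rw [hqdef, htdef, ← Real.exp_add, eq_div_iff (by positivity), ← Real.exp_add]
      rw [show -(θ * (1 - x)) + (θ + -(θ * x)) = 0 by ring, Real.exp_zero]
    have he2 : Real.exp (-(2 * θ * (1 - x))) = 1 / (q * t) ^ 2 := by
      rw [show -(2 * θ * (1 - x)) = -(θ * (1 - x)) + -(θ * (1 - x)) by ring, Real.exp_add, he1]
      ring
    have he3 : Real.exp (-(2 * θ * x)) = t ^ 2 := by
      rw [show -(2 * θ * x) = -(θ * x) + -(θ * x) by ring, Real.exp_add, htdef]; ring
    set w : ℝ := Real.sqrt (1 - t ^ 2) with hwdef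
    have hw0 : 0 ≤ w := Real.sqrt_nonneg _
    have hw : w ^ 2 = 1 - t ^ 2 := Real.sq_sqrt (by nlinarith)
    -- chord inequality
    have hexpneg : Real.exp (-θ) = 1 / q := by
      rw [hqdef, Real.exp_neg]; exact inv_eq_one_div _
    have hconv := convexOn_exp.2 (Set.mem_univ (0:ℝ)) (Set.mem_univ (-θ))
      (by linarith : (0:ℝ) ≤ 1 - x) hx0 (by ring)
    simp only [smul_eq_mul, mul_zero, Real.exp_zero, mul_one, zero_add] at hconv
    rw [show x * -θ = -(θ * x) by ring] at hconv
    rw [hexpneg, ← htdef] at hconv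
    -- rewrite the goal
    rw [hTd x, he2, he3, he1, ← hwdef, ← hq2]
    clear_value T q t w
    clear hq2 hTd he1 he2 he3 htdef hwdef hqdef hexpneg hθd hθ0 hcd hcsq hc1 hc0 hca hcb hs5 hs5a hs5b
    clear_value c θ
    have hchord : x * (q - 1) ≤ (1 - t) * q := by
      have h := mul_le_mul_of_nonneg_right hconv hqpos.le
      have hinv : x * (1/q) * q = x := by field_simp
      nlinarith [h, hinv]
    have hq2t2 : (0:ℝ) < q^2*t^2 := by positivity
    have hq1 : (0:ℝ) < q - 1 := by linarith
    have hmain : q^2*(1+x)*(q^2*t^2) ≤ q^2*t^2 + 1 + 2*w*q*t := by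
      have hcore := core_ineq q t w hq4 hqa hqb ht1 hqt hw0 hw
      have hB : q^4*t^2*(x*(q-1)) ≤ q^4*t^2*((1-t)*q) :=
        mul_le_mul_of_nonneg_left hchord (by positivity)
      have hscaled : (q-1) * (q^2*(1+x)*(q^2*t^2)) ≤ (q-1) * (q^2*t^2 + 1 + 2*w*q*t) := by
        nlinarith [hcore, hB]
      exact (mul_le_mul_iff_right₀ hq1).1 hscaled
    rw [le_div_iff₀ (by linarith : (0:ℝ) < 1+x)]
    have h2 : (1:ℝ) + 1/(q*t)^2 + 2*w*(1/(q*t)) = (q^2*t^2 + 1 + 2*w*q*t)/(q^2*t^2) := by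
      field_simp
    rw [h2, show (1:ℝ)/2 * ((q^2*t^2 + 1 + 2*w*q*t)/(q^2*t^2)) = (q^2*t^2 + 1 + 2*w*q*t)/(2*(q^2*t^2)) by ring,
      le_div_iff₀ (by linarith : (0:ℝ) < 2*(q^2*t^2))]
    nlinarith [hmain]
  · have hec : Real.exp (-(2*θ*(1-0))) = 1/c := by
      rw [show -(2*θ*(1-0)) = -(Real.log c) by rw [hθd]; ring, Real.exp_neg, Real.exp_log hc0,
        inv_eq_one_div]
    have he0 : Real.exp (-(2*θ*(0:ℝ))) = 1 := by norm_num
    rw [hTd 0, hec, he0]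
    rw [show (1:ℝ) - 1 = 0 by norm_num, Real.sqrt_zero]
    field_simp
    linear_combination hcsq - (1/2) * hs5
end

section
/- Let P = (X - Y)/√2 and θ ∈ ℝ, and let |χ⟩ = exp(i·θ·(P⊗P))·|00⟩ on two qubits. Let h^EPR = (1/2)(I⊗I + X⊗X - Y⊗Y + Z⊗Z). Then ⟨χ| h^EPR |χ⟩ = 1 + 2·cos θ·sin θ, and the reduced density matrix of |χ⟩⟨χ| on the first qubit equals cos(2θ)·|0⟩⟨0| + 2 sin²θ·(I/2) = (1/2)(I + cos(2θ)·Z). -/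
set_option maxHeartbeats 1000000

open Kronecker Matrix

noncomputable def pauliX : Matrix (Fin 2) (Fin 2) ℂ := !![0, 1; 1, 0]
noncomputable def pauliY : Matrix (Fin 2) (Fin 2) ℂ := !![0, -Complex.I; Complex.I, 0]
noncomputable def pauliZ : Matrix (Fin 2) (Fin 2) ℂ := !![1, 0; 0, -1]

/-- `P = (X - Y)/√2`. -/
noncomputable def pOp : Matrix (Fin 2) (Fin 2) ℂ :=
  ((1 : ℂ) / Real.sqrt 2) • (pauliX - pauliY)

/-- `|00⟩` as a vector of `ℂ² ⊗ ℂ²`. -/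
noncomputable def ket00 : Fin 2 × Fin 2 → ℂ := fun p =>
  if p = ((0 : Fin 2), (0 : Fin 2)) then 1 else 0

lemma exp_I_theta_smul {n : Type*} [Fintype n] [DecidableEq n]
    (M : Matrix n n ℂ) (hM : M * M = 1) (θ : ℝ) :
    NormedSpace.exp (Complex.I • (θ : ℂ) • M)
      = (Complex.cos θ) • (1 : Matrix n n ℂ) + (Complex.I * Complex.sin θ) • M := by
  have hpe : ∀ k : ℕ, M ^ (2 * k) = 1 := by
    intro k; rw [pow_mul, pow_two, hM, one_pow]
  have hpo : ∀ k : ℕ, M ^ (2 * k + 1) = M := by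
    intro k; rw [pow_succ, hpe, one_mul]
  rw [NormedSpace.exp_eq_tsum (𝕂 := ℂ), smul_smul]
  set c : ℂ := Complex.I * θ with hc
  have hc2 : ∀ k : ℕ, c ^ (2 * k) = (-1) ^ k * (θ:ℂ) ^ (2 * k) := by
    intro k
    rw [pow_mul, pow_mul, hc, mul_pow, Complex.I_sq]
    ring
  have hterm : ∀ m : ℕ, ((Nat.factorial m :ℂ))⁻¹ • ((c • M) ^ m) = (c ^ m / (Nat.factorial m)) • M ^ m := by
    intro m; rw [smul_pow, smul_smul, div_eq_inv_mul]
  have he : HasSum (fun k : ℕ => ((Nat.factorial (2*k):ℂ))⁻¹ • ((c • M) ^ (2*k)))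
      ((Complex.cos θ) • (1 : Matrix n n ℂ)) := by
    have := (Complex.hasSum_cos (θ:ℂ)).smul_const (1 : Matrix n n ℂ)
    convert this using 2 with k
    rw [hterm, hpe, hc2]
  have ho : HasSum (fun k : ℕ => ((Nat.factorial (2*k+1):ℂ))⁻¹ • ((c • M) ^ (2*k+1)))
      ((Complex.I * Complex.sin θ) • M) := by
    have h1 := (Complex.hasSum_sin (θ:ℂ)).mul_left Complex.I
    have := h1.smul_const M
    convert this using 2 with k
    rw [hterm, hpo, pow_succ, hc2]
    congr 1
    field_simp
    ring
  have hsum := HasSum.even_add_odd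
    (f := fun m : ℕ => ((Nat.factorial m : ℂ))⁻¹ • (c • M) ^ m) he ho
  exact hsum.tsum_eq

lemma sqrt2_sq : ((Real.sqrt 2 : ℝ) : ℂ) * ((Real.sqrt 2 : ℝ) : ℂ) = 2 := by
  norm_cast
  exact Real.mul_self_sqrt (by norm_num)

lemma pOp_sq : pOp * pOp = 1 := by
  have h2 := sqrt2_sq
  have hs : (Real.sqrt 2 : ℂ) ≠ 0 := by
    intro h; rw [h, mul_zero] at h2; norm_num at h2
  ext i j
  fin_cases i <;> fin_cases j <;>
    simp [pOp, pauliX, pauliY, Matrix.mul_apply, Fin.sum_univ_two, Matrix.one_apply] <;>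
    field_simp <;> simp only [pow_two, h2] <;> ring_nf <;> simp [Complex.I_sq] <;> ring

lemma POP_sq : (pOp ⊗ₖ pOp) * (pOp ⊗ₖ pOp) = 1 := by
  rw [← Matrix.mul_kronecker_mul, pOp_sq, Matrix.one_kronecker_one]

theorem epr_partial_entangling (θ : ℝ) :
    let χ : Fin 2 × Fin 2 → ℂ :=
      (NormedSpace.exp (Complex.I • (θ : ℂ) • (pOp ⊗ₖ pOp))).mulVec ket00
    let hEPR : Matrix (Fin 2 × Fin 2) (Fin 2 × Fin 2) ℂ :=
      (1 / 2 : ℂ) • ((1 : Matrix (Fin 2) (Fin 2) ℂ) ⊗ₖ (1 : Matrix (Fin 2) (Fin 2) ℂ)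
        + pauliX ⊗ₖ pauliX - pauliY ⊗ₖ pauliY + pauliZ ⊗ₖ pauliZ)
    (star χ) ⬝ᵥ hEPR.mulVec χ = ((1 + 2 * Real.cos θ * Real.sin θ : ℝ) : ℂ) ∧
      (Matrix.of fun a b : Fin 2 => ∑ k : Fin 2, (Matrix.vecMulVec χ (star χ)) (a, k) (b, k))
        = (1 / 2 : ℂ) • ((1 : Matrix (Fin 2) (Fin 2) ℂ)
            + ((Real.cos (2 * θ) : ℝ) : ℂ) • pauliZ) := by
  intro χ hEPR
  have h2 := sqrt2_sq
  have hs : (Real.sqrt 2 : ℂ) ≠ 0 := by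
    intro h; rw [h, mul_zero] at h2; norm_num at h2
  have hχ : χ = fun p : Fin 2 × Fin 2 =>
      if p = (0, 0) then ((Real.cos θ : ℝ) : ℂ)
      else if p = (1, 1) then ((Real.sin θ : ℝ) : ℂ) else 0 := by
    show (NormedSpace.exp (Complex.I • (θ : ℂ) • (pOp ⊗ₖ pOp))).mulVec ket00 = _
    rw [exp_I_theta_smul _ POP_sq]
    funext p
    obtain ⟨a, b⟩ := p
    have hI3 : Complex.I ^ 3 = -Complex.I := by
      rw [pow_succ, Complex.I_sq]; ring
    fin_cases a <;> fin_cases b <;>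
      simp [Matrix.mulVec, dotProduct, ket00, pOp, pauliX, pauliY,
        Matrix.kroneckerMap_apply, Matrix.one_apply, Fintype.sum_prod_type,
        Fin.sum_univ_two, Matrix.add_apply, Matrix.smul_apply,
        Complex.ofReal_cos, Complex.ofReal_sin]
    field_simp
    simp only [pow_two, h2]
    ring_nf
    simp only [hI3, Complex.I_sq]
    ring
  have hR : Complex.sin (θ:ℂ) ^ 2 + Complex.cos (θ:ℂ) ^ 2 = 1 := Complex.sin_sq_add_cos_sq _
  have hcc : (starRingEnd ℂ) (Complex.cos (θ:ℂ)) = Complex.cos (θ:ℂ) := by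
    rw [← Complex.ofReal_cos]; exact Complex.conj_ofReal _
  have hss : (starRingEnd ℂ) (Complex.sin (θ:ℂ)) = Complex.sin (θ:ℂ) := by
    rw [← Complex.ofReal_sin]; exact Complex.conj_ofReal _
  rw [hχ]
  constructor
  · simp only [hEPR, dotProduct, Matrix.mulVec, Fintype.sum_prod_type, Fin.sum_univ_two,
      Matrix.smul_apply, Matrix.add_apply, Matrix.sub_apply, Matrix.kroneckerMap_apply,
      Matrix.one_apply, pauliX, pauliY, pauliZ]
    norm_num
    simp only [← Complex.ofReal_cos, ← Complex.ofReal_sin, Complex.conj_ofReal]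
    push_cast
    linear_combination hR
  · ext a b
    fin_cases a <;> fin_cases b
    · simp [Matrix.vecMulVec_apply, Fin.sum_univ_two, Matrix.one_apply, pauliZ,
        Real.cos_two_mul, Complex.star_def, Complex.conj_ofReal, hcc, hss]
      ring
    · simp [Matrix.vecMulVec_apply, Fin.sum_univ_two, Matrix.one_apply, pauliZ,
        Real.cos_two_mul, Complex.star_def, Complex.conj_ofReal]
    · simp [Matrix.vecMulVec_apply, Fin.sum_univ_two, Matrix.one_apply, pauliZ,
        Real.cos_two_mul, Complex.star_def, Complex.conj_ofReal]
    · simp [Matrix.vecMulVec_apply, Fin.sum_univ_two, Matrix.one_apply, pauliZ,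
        Real.cos_two_mul, Complex.star_def, Complex.conj_ofReal, hcc, hss]
      linear_combination hR
end
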